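/- Let Γ ≤ S_n be a permutation group, V an invariant subspace of Γ, and z ∈ Z^n with Σ_i z_i = k having locally minimal projection onto V. If stab_Γ(z) = stab_Γ(π_V(z)), then z is a core point for Γ. -/

import Mathlib

noncomputable section
open scoped RealInnerProductSpace

def permAct {n : ℕ} (γ : Equiv.Perm (Fin n)) (x : EuclideanSpace ℝ (Fin n)) :
    EuclideanSpace ℝ (Fin n) := WithLp.toLp 2 (fun i => x (γ⁻¹ i))

def allOnes (n : ℕ) : EuclideanSpace ℝ (Fin n) := WithLp.toLp 2 (fun _ => 1)

def intVec {n : ℕ} (z : Fin n → ℤ) : EuclideanSpace ℝ (Fin n) := WithLp.toLp 2 (fun i => (z i : ℝ))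

def orbitSet {n : ℕ} (Γ : Subgroup (Equiv.Perm (Fin n))) (x : EuclideanSpace ℝ (Fin n)) :
    Set (EuclideanSpace ℝ (Fin n)) := {y | ∃ γ ∈ Γ, y = permAct γ x}

def IsCorePoint {n : ℕ} (Γ : Subgroup (Equiv.Perm (Fin n))) (z : Fin n → ℤ) : Prop :=
  ∀ y : Fin n → ℤ, intVec y ∈ convexHull ℝ (orbitSet Γ (intVec z)) →
    intVec y ∈ orbitSet Γ (intVec z)

def stabSub {n : ℕ} (Γ : Subgroup (Equiv.Perm (Fin n))) (v : EuclideanSpace ℝ (Fin n)) :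
    Subgroup (Equiv.Perm (Fin n)) where
  carrier := {γ | γ ∈ Γ ∧ permAct γ v = v}
  one_mem' := ⟨Γ.one_mem, rfl⟩
  mul_mem' := fun {a b} ha hb => ⟨Γ.mul_mem ha.1 hb.1, by
    have h : permAct (a * b) v = permAct a (permAct b v) := rfl
    rw [h, hb.2, ha.2]⟩
  inv_mem' := fun {a} ha => ⟨Γ.inv_mem ha.1, by
    conv_lhs => rw [← ha.2]
    have h : permAct a⁻¹ (permAct a v) = permAct (a⁻¹ * a) v := rfl
    rw [h, inv_mul_cancel]; rfl⟩

variable {n : ℕ}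

lemma permAct_mul' (a b : Equiv.Perm (Fin n)) (x : EuclideanSpace ℝ (Fin n)) :
    permAct (a * b) x = permAct a (permAct b x) := by
  ext i
  show x ((a*b)⁻¹ i) = x (b⁻¹ (a⁻¹ i))
  rw [mul_inv_rev]; rfl

lemma permAct_one' (x : EuclideanSpace ℝ (Fin n)) : permAct 1 x = x := rfl

lemma permAct_inner (γ : Equiv.Perm (Fin n)) (x y : EuclideanSpace ℝ (Fin n)) :
    ⟪permAct γ x, permAct γ y⟫ = ⟪x, y⟫ := by
  simp only [PiLp.inner_apply, permAct, RCLike.inner_apply, conj_trivial]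
  exact Equiv.sum_comp γ⁻¹ (fun i => y i * x i)

lemma permAct_norm (γ : Equiv.Perm (Fin n)) (x : EuclideanSpace ℝ (Fin n)) :
    ‖permAct γ x‖ = ‖x‖ := by
  have h := permAct_inner γ x x
  rw [real_inner_self_eq_norm_sq, real_inner_self_eq_norm_sq] at h
  nlinarith [norm_nonneg (permAct γ x), norm_nonneg x]

lemma permAct_inner_left (γ : Equiv.Perm (Fin n)) (x y : EuclideanSpace ℝ (Fin n)) :
    ⟪permAct γ x, y⟫ = ⟪x, permAct γ⁻¹ y⟫ := by
  have h : y = permAct γ (permAct γ⁻¹ y) := by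
    rw [← permAct_mul', mul_inv_cancel, permAct_one']
  conv_lhs => rw [h]
  exact permAct_inner γ x (permAct γ⁻¹ y)

lemma mem_stabSub {Γ : Subgroup (Equiv.Perm (Fin n))} {v : EuclideanSpace ℝ (Fin n)}
    {γ : Equiv.Perm (Fin n)} : γ ∈ stabSub Γ v ↔ γ ∈ Γ ∧ permAct γ v = v := Iff.rfl

lemma sum_coords (x : EuclideanSpace ℝ (Fin n)) : ⟪x, allOnes n⟫ = ∑ j, x j := by
  simp [PiLp.inner_apply, allOnes, RCLike.inner_apply]

lemma permAct_sub (γ : Equiv.Perm (Fin n)) (x y : EuclideanSpace ℝ (Fin n)) :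
    permAct γ (x - y) = permAct γ x - permAct γ y := rfl

lemma proj_comm {V : Submodule ℝ (EuclideanSpace ℝ (Fin n))}
    (Γ : Subgroup (Equiv.Perm (Fin n)))
    (hV : ∀ γ ∈ Γ, ∀ v ∈ V, permAct γ v ∈ V) {γ : Equiv.Perm (Fin n)} (hγ : γ ∈ Γ)
    (x : EuclideanSpace ℝ (Fin n)) :
    (Submodule.orthogonalProjectionOnto V (permAct γ x) : EuclideanSpace ℝ (Fin n)) =
      permAct γ (Submodule.orthogonalProjectionOnto V x) := by
  apply Submodule.eq_starProjection_of_mem_of_inner_eq_zero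
  · exact hV γ hγ _ (Submodule.orthogonalProjectionOnto V x).2
  · intro w hw
    rw [← permAct_sub, permAct_inner_left]
    exact Submodule.starProjection_inner_eq_zero x _ (hV γ⁻¹ (Γ.inv_mem hγ) w hw)

theorem stmt10 {n : ℕ} (Γ : Subgroup (Equiv.Perm (Fin n)))
    (V : Submodule ℝ (EuclideanSpace ℝ (Fin n)))
    (hV : ∀ γ ∈ Γ, ∀ v ∈ V, permAct γ v ∈ V)
    (z : Fin n → ℤ) (k : ℤ) (hk : ∑ i, z i = k)
    (hmin : ∀ z' : Fin n → ℤ, ∑ i, z' i = k → ‖intVec z'‖ ≤ ‖intVec z‖ →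
      ‖(Submodule.orthogonalProjectionOnto V (intVec z) : EuclideanSpace ℝ (Fin n))‖ ≤
        ‖(Submodule.orthogonalProjectionOnto V (intVec z') : EuclideanSpace ℝ (Fin n))‖)
    (hstab : stabSub Γ (intVec z) =
      stabSub Γ (Submodule.orthogonalProjectionOnto V (intVec z) : EuclideanSpace ℝ (Fin n))) :
    IsCorePoint Γ z := by
  classical
  intro y hy
  set ζ : EuclideanSpace ℝ (Fin n) := intVec z with hζdef
  set q : EuclideanSpace ℝ (Fin n) := (Submodule.orthogonalProjectionOnto V ζ : EuclideanSpace ℝ (Fin n))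
    with hqdef
  rw [convexHull_eq] at hy
  obtain ⟨ι, t, w, v, hw0, hw1, hvs, hvy⟩ := hy
  rw [Finset.centerMass_eq_of_sum_1 _ _ hw1] at hvy
  choose g hgΓ hgv using hvs
  set G : ι → Equiv.Perm (Fin n) := fun i => if h : i ∈ t then g i h else 1 with hGdef
  have hGΓ : ∀ i ∈ t, G i ∈ Γ := fun i hi => by simp only [hGdef, dif_pos hi]; exact hgΓ i hi
  have hGv : ∀ i ∈ t, v i = permAct (G i) ζ := fun i hi => by
    simp only [hGdef, dif_pos hi]; exact hgv i hi
  -- sum of coordinates of y is k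
  have hζsum : ⟪ζ, allOnes n⟫ = (k : ℝ) := by
    rw [sum_coords]
    simp only [hζdef, intVec]
    exact_mod_cast hk
  have hones : ∀ γ : Equiv.Perm (Fin n), permAct γ (allOnes n) = allOnes n := fun γ => rfl
  have hysum : ∑ i, y i = k := by
    have h1 : ⟪intVec y, allOnes n⟫ = (k : ℝ) := by
      rw [← hvy, sum_inner]
      have : ∀ i ∈ t, ⟪w i • v i, allOnes n⟫ = w i * (k : ℝ) := by
        intro i hi
        rw [real_inner_smul_left, hGv i hi, permAct_inner_left, hones, hζsum]
      rw [Finset.sum_congr rfl this, ← Finset.sum_mul, hw1, one_mul]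
    rw [sum_coords] at h1
    have h2 : ∑ j, ((y j : ℝ)) = (k : ℝ) := h1
    exact_mod_cast h2
  -- norm of y at most norm of z
  have hynorm : ‖intVec y‖ ≤ ‖ζ‖ := by
    rw [← hvy]
    calc ‖∑ i ∈ t, w i • v i‖ ≤ ∑ i ∈ t, ‖w i • v i‖ := norm_sum_le _ _
      _ = ∑ i ∈ t, w i * ‖ζ‖ := by
          refine Finset.sum_congr rfl fun i hi => ?_
          rw [norm_smul, Real.norm_eq_abs, abs_of_nonneg (hw0 i hi), hGv i hi, permAct_norm]
      _ = ‖ζ‖ := by rw [← Finset.sum_mul, hw1, one_mul]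
  set p : EuclideanSpace ℝ (Fin n) :=
    (Submodule.orthogonalProjectionOnto V (intVec y) : EuclideanSpace ℝ (Fin n)) with hpdef
  have hqp : ‖q‖ ≤ ‖p‖ := hmin y hysum hynorm
  -- p as convex combination
  have hprep : p = ∑ i ∈ t, w i • permAct (G i) q := by
    rw [hpdef, ← hvy, map_sum]
    push_cast
    refine Finset.sum_congr rfl fun i hi => ?_
    rw [map_smul]
    push_cast
    rw [hGv i hi, proj_comm Γ hV (hGΓ i hi)]
  have hpq : ‖p‖ = ‖q‖ := by
    refine le_antisymm ?_ hqp
    rw [hprep]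
    calc ‖∑ i ∈ t, w i • permAct (G i) q‖ ≤ ∑ i ∈ t, ‖w i • permAct (G i) q‖ := norm_sum_le _ _
      _ = ∑ i ∈ t, w i * ‖q‖ := by
          refine Finset.sum_congr rfl fun i hi => ?_
          rw [norm_smul, Real.norm_eq_abs, abs_of_nonneg (hw0 i hi), permAct_norm]
      _ = ‖q‖ := by rw [← Finset.sum_mul, hw1, one_mul]
  -- equality in the inner product estimate
  have hterm : ∀ i ∈ t, w i * ⟪permAct (G i) q, p⟫ = w i * (‖p‖ * ‖p‖) := by
    have hle : ∀ i ∈ t, w i * ⟪permAct (G i) q, p⟫ ≤ w i * (‖p‖ * ‖p‖) := by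
      intro i hi
      refine mul_le_mul_of_nonneg_left ?_ (hw0 i hi)
      calc ⟪permAct (G i) q, p⟫ ≤ ‖permAct (G i) q‖ * ‖p‖ := real_inner_le_norm _ _
        _ = ‖p‖ * ‖p‖ := by rw [permAct_norm, ← hpq]
    have hsum : ∑ i ∈ t, w i * ⟪permAct (G i) q, p⟫ = ∑ i ∈ t, w i * (‖p‖ * ‖p‖) := by
      have h1 : ⟪(∑ i ∈ t, w i • permAct (G i) q : EuclideanSpace ℝ (Fin n)), p⟫ =
          ∑ i ∈ t, w i * ⟪permAct (G i) q, p⟫ := by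
        rw [sum_inner]
        exact Finset.sum_congr rfl fun i hi => real_inner_smul_left _ _ _
      rw [← h1, ← hprep, real_inner_self_eq_norm_mul_norm, ← Finset.sum_mul, hw1, one_mul]
    exact (Finset.sum_eq_sum_iff_of_le hle).mp hsum
  have hueq : ∀ i ∈ t, 0 < w i → permAct (G i) q = p := by
    intro i hi hwi
    have h1 : ⟪permAct (G i) q, p⟫ = ‖p‖ * ‖p‖ :=
      mul_left_cancel₀ (ne_of_gt hwi) (hterm i hi)
    have h2 : ‖permAct (G i) q - p‖ ^ 2 = 0 := by
      rw [norm_sub_sq_real, permAct_norm, ← hpq, h1]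
      ring
    rw [pow_eq_zero_iff (by norm_num), norm_eq_zero, sub_eq_zero] at h2
    exact h2
  -- find a positive weight
  have hpos : ∃ i ∈ t, 0 < w i := by
    by_contra hcon
    push_neg at hcon
    have : ∑ i ∈ t, w i ≤ 0 := Finset.sum_nonpos hcon
    linarith [hw1 ▸ this]
  obtain ⟨i₀, hi₀, hwi₀⟩ := hpos
  refine ⟨G i₀, hGΓ i₀ hi₀, ?_⟩
  have hcollapse : ∀ i ∈ t, 0 < w i → permAct (G i) ζ = permAct (G i₀) ζ := by
    intro i hi hwi
    have h1 : permAct ((G i₀)⁻¹ * G i) q = q := by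
      rw [permAct_mul', hueq i hi hwi, ← hueq i₀ hi₀ hwi₀, ← permAct_mul', inv_mul_cancel,
        permAct_one']
    have h2 : (G i₀)⁻¹ * G i ∈ stabSub Γ q :=
      mem_stabSub.mpr ⟨Γ.mul_mem (Γ.inv_mem (hGΓ i₀ hi₀)) (hGΓ i hi), h1⟩
    rw [← hstab] at h2
    have h3 : permAct ((G i₀)⁻¹ * G i) ζ = ζ := (mem_stabSub.mp h2).2
    calc permAct (G i) ζ = permAct (G i₀ * ((G i₀)⁻¹ * G i)) ζ := by group
      _ = permAct (G i₀) (permAct ((G i₀)⁻¹ * G i) ζ) := permAct_mul' _ _ _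
      _ = permAct (G i₀) ζ := by rw [h3]
  have : intVec y = ∑ i ∈ t, w i • permAct (G i₀) ζ := by
    rw [← hvy]
    refine Finset.sum_congr rfl fun i hi => ?_
    rcases eq_or_lt_of_le (hw0 i hi) with h | h
    · rw [← h, zero_smul, zero_smul]
    · rw [hGv i hi, hcollapse i hi h]
  rw [this, ← Finset.sum_smul, hw1, one_smul]
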